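/- Consider the first-order language L with a single binary function symbol, and endow ℕ with the L-structure in which the binary function symbol is interpreted by the remainder operation %. Then the strict order relation, i.e. the set {v : Fin 2 → ℕ | v 0 < v 1}, is definable in this structure without parameters. -/
import Mathlib


/-- The type of function symbols of the language `L`: a single binary function symbol. -/
inductive ModFunc : ℕ → Type
  | mod : ModFunc 2

/-- The first-order language with a single binary function symbol. -/
def L : FirstOrder.Language := ⟨ModFunc, fun _ => Empty⟩

/-- The `L`-structure on ℕ interpreting the binary function symbol as the remainder `%`. -/
instance : L.Structure ℕ where
  funMap := fun {n} f v =>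
    match n, f, v with
    | _, .mod, v => v 0 % v 1
  RelMap := fun r _ => r.elim

open FirstOrder FirstOrder.Language

/-- The term `a % b`. -/
def modT (a b : L.Term (Fin 2)) : L.Term (Fin 2) :=
  Term.func ModFunc.mod ![a, b]

lemma realize_modT (a b : L.Term (Fin 2)) (v : Fin 2 → ℕ) :
    (modT a b).realize v = a.realize v % b.realize v := by
  simp [modT, Term.realize, Structure.funMap]

lemma lt_iff_mod (x y : ℕ) : x < y ↔ x % y = x ∧ ¬ y % y = y := by
  constructor
  · intro h
    refine ⟨Nat.mod_eq_of_lt h, ?_⟩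
    simp [Nat.mod_self]
    omega
  · rintro ⟨h1, h2⟩
    have hy : y ≠ 0 := by
      intro h; subst h; simp at h2
    rcases Nat.lt_or_ge x y with h | h
    · exact h
    · exfalso
      have := Nat.mod_lt x (Nat.pos_of_ne_zero hy)
      omega

theorem lt_definable_in_mod :
    Set.Definable (∅ : Set ℕ) L {v : Fin 2 → ℕ | v 0 < v 1} := by
  rw [Set.empty_definable_iff]
  refine ⟨(Term.equal (modT (Term.var 0) (Term.var 1)) (Term.var 0)) ⊓
    ∼(Term.equal (modT (Term.var 1) (Term.var 1)) (Term.var 1)), ?_⟩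
  ext v
  simp only [Set.mem_setOf_eq, Formula.realize_inf, Formula.realize_not,
    Formula.realize_equal, realize_modT, Term.realize_var]
  exact lt_iff_mod (v 0) (v 1)
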